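/- Let R be an integral domain and N a free abelian group of finite rank. For nonzero f, g in the group algebra R[N], the Newton polytope of the product is the Minkowski sum of the Newton polytopes: Newt(fg) = Newt(f) + Newt(g). -/

import Mathlib

open Pointwise

/-- The Newton polytope of a Laurent polynomial `f ∈ R[N]`, `N = ℤ^d`:
the convex hull in `N ⊗ ℝ = ℝ^d` of the support of `f`. -/
def NewtonPolytope {R : Type*} [CommRing R] {d : ℕ}
    (f : AddMonoidAlgebra R (Fin d → ℤ)) : Set (Fin d → ℝ) :=
  convexHull ℝ ((fun (n : Fin d → ℤ) (i : Fin d) => (n i : ℝ)) '' (f.coeff.support : Set (Fin d → ℤ)))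

/-- For an integral domain `R` and nonzero `f, g` in the Laurent
polynomial ring `R[N]`, the Newton polytope of the product is the Minkowski sum of the
Newton polytopes: `Newt(fg) = Newt(f) + Newt(g)`. -/
theorem newtonPolytope_mul {R : Type*} [CommRing R] [IsDomain R] {d : ℕ}
    (f g : AddMonoidAlgebra R (Fin d → ℤ)) (hf : f ≠ 0) (hg : g ≠ 0) :
    NewtonPolytope (f * g) = NewtonPolytope f + NewtonPolytope g := by
  classical
  set ιh : (Fin d → ℤ) →+ (Fin d → ℝ) :=
    { toFun := fun n i => (n i : ℝ)
      map_zero' := by funext i; simp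
      map_add' := by intro a b; funext i; simp } with hιh
  have hinj : Function.Injective ιh := by
    intro a b h
    funext i
    have := congrFun h i
    simpa [hιh] using this
  have hNewt : ∀ (h : AddMonoidAlgebra R (Fin d → ℤ)),
      NewtonPolytope h = convexHull ℝ (ιh '' (h.coeff.support : Set (Fin d → ℤ))) := by
    intro h; rfl
  -- the target as convex hull of the image of the sum of supports
  have hsum : NewtonPolytope f + NewtonPolytope g =
      convexHull ℝ (ιh '' ((f.coeff.support + g.coeff.support : Finset (Fin d → ℤ)) : Set (Fin d → ℤ))) := by
    rw [hNewt f, hNewt g, Finset.coe_add, Set.image_add, convexHull_add]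
  rw [hsum]
  apply Set.Subset.antisymm
  · -- easy inclusion
    rw [hNewt]
    apply convexHull_mono
    apply Set.image_mono
    exact_mod_cast AddMonoidAlgebra.support_coeff_mul_subset f g
  · -- hard inclusion
    set S : Set (Fin d → ℝ) :=
      ιh '' ((f.coeff.support + g.coeff.support : Finset (Fin d → ℤ)) : Set (Fin d → ℤ)) with hS
    have hSfin : S.Finite := ((f.coeff.support + g.coeff.support).finite_toSet).image _
    have hcomp : IsCompact (convexHull ℝ S) := hSfin.isCompact_convexHull ℝ
    -- every extreme point of the hull lies in the support of f * g
    have hext : (convexHull ℝ S).extremePoints ℝ ⊆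
        ιh '' ((f * g).coeff.support : Set (Fin d → ℤ)) := by
      intro v hv
      have hvS : v ∈ S := extremePoints_convexHull_subset hv
      obtain ⟨n, hn, rfl⟩ := hvS
      rw [Finset.mem_coe, Finset.mem_add] at hn
      obtain ⟨a₀, ha₀, b₀, hb₀, rfl⟩ := hn
      -- uniqueness of the decomposition
      have huniq : UniqueAdd f.coeff.support g.coeff.support a₀ b₀ := by
        intro a b ha hb hab
        have h1 : ιh (a + b₀) ∈ convexHull ℝ S := by
          apply subset_convexHull
          exact ⟨a + b₀, Finset.mem_coe.2 (Finset.add_mem_add ha hb₀), rfl⟩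
        have h2 : ιh (a₀ + b) ∈ convexHull ℝ S := by
          apply subset_convexHull
          exact ⟨a₀ + b, Finset.mem_coe.2 (Finset.add_mem_add ha₀ hb), rfl⟩
        have hmid : ιh (a₀ + b₀) ∈ openSegment ℝ (ιh (a + b₀)) (ιh (a₀ + b)) := by
          refine ⟨1/2, 1/2, by norm_num, by norm_num, by norm_num, ?_⟩
          have key : ιh (a + b₀) + ιh (a₀ + b) = ιh (a₀ + b₀) + ιh (a₀ + b₀) := by
            rw [← map_add, ← map_add]
            congr 1
            have h3 : a + b₀ + (a₀ + b) = a + b + (a₀ + b₀) := by abel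
            rw [h3, hab]
          rw [← smul_add, key, smul_add, ← add_smul]
          norm_num
        have := hv.2 h1 h2 hmid
        have heq : a + b₀ = a₀ + b₀ := hinj this
        have ha' : a = a₀ := by
          have := add_right_cancel heq; exact this
        refine ⟨ha', ?_⟩
        rw [ha'] at hab
        exact add_left_cancel hab
      have hcoef : (f * g).coeff (a₀ + b₀) = f.coeff a₀ * g.coeff b₀ :=
        AddMonoidAlgebra.coeff_mul_add_of_uniqueAdd huniq
      have hne : (f * g).coeff (a₀ + b₀) ≠ 0 := by
        rw [hcoef]
        exact mul_ne_zero (Finsupp.mem_support_iff.1 ha₀) (Finsupp.mem_support_iff.1 hb₀)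
      exact ⟨a₀ + b₀, Finsupp.mem_support_iff.2 hne, rfl⟩
    -- Krein–Milman for the polytope
    have hKM : convexHull ℝ S = convexHull ℝ ((convexHull ℝ S).extremePoints ℝ) := by
      have h1 := closure_convexHull_extremePoints hcomp (convex_convexHull ℝ S)
      have hfin : ((convexHull ℝ S).extremePoints ℝ).Finite :=
        hSfin.subset extremePoints_convexHull_subset
      rw [IsCompact.isClosed (hfin.isCompact_convexHull ℝ) |>.closure_eq] at h1
      exact h1.symm
    calc convexHull ℝ S = convexHull ℝ ((convexHull ℝ S).extremePoints ℝ) := hKM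
      _ ⊆ convexHull ℝ (ιh '' ((f * g).coeff.support : Set (Fin d → ℤ))) := convexHull_mono hext
      _ = NewtonPolytope (f * g) := (hNewt _).symm
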